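/- For every λ ∈ [0,1], the coskewness under the mixture copula C^λ is the convex combination of the extreme coskewnesses: E[f₁(U)·f₂(U₂)·f₃(U₃^λ)] = λ·E[f₁(U)f₂(U₂)f₃(U₃ᴹ)] + (1−λ)·E[f₁(U)f₂(U₂)f₃(U₃ᵐ)] = (2λ−1)·∫₀¹ |f₁(u)f₂(u)f₃(u)| du. In particular, as λ ranges over [0,1] the coskewness attains every value between the minimum −∫₀¹|f₁f₂f₃| and the maximum ∫₀¹|f₁f₂f₃|. -/

import Mathlib

open MeasureTheory ProbabilityTheory

/-- Indicator of the event `x > 1/2`. -/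
noncomputable def ind (x : ℝ) : ℝ := if x > 1/2 then 1 else 0

/-- `U₂ = IJU + I(1−J)(1−U) + (1−I)JU + (1−I)(1−J)(1−U)`. -/
noncomputable def u2 (u v : ℝ) : ℝ :=
  ind u * ind v * u + ind u * (1 - ind v) * (1 - u)
    + (1 - ind u) * ind v * u + (1 - ind u) * (1 - ind v) * (1 - u)

/-- `U₃ᴹ = IJU + I(1−J)(1−U) + (1−I)J(1−U) + (1−I)(1−J)U`. -/
noncomputable def u3M (u v : ℝ) : ℝ :=
  ind u * ind v * u + ind u * (1 - ind v) * (1 - u)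
    + (1 - ind u) * ind v * (1 - u) + (1 - ind u) * (1 - ind v) * u

/-- `U₃ᵐ = IJ(1−U) + I(1−J)U + (1−I)JU + (1−I)(1−J)(1−U)`. -/
noncomputable def u3m (u v : ℝ) : ℝ :=
  ind u * ind v * (1 - u) + ind u * (1 - ind v) * u
    + (1 - ind u) * ind v * u + (1 - ind u) * (1 - ind v) * (1 - u)

lemma u2_eq (u v : ℝ) : u2 u v = if v > 1/2 then u else 1 - u := by
  unfold u2 ind; split_ifs <;> ring

lemma u3M_eq (u v : ℝ) : u3M u v = if (u > 1/2 ↔ v > 1/2) then u else 1 - u := by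
  unfold u3M ind; split_ifs <;> first | ring1 | tauto

lemma u3m_eq (u v : ℝ) : u3m u v = 1 - u3M u v := by unfold u3m u3M; ring

lemma fpos_half {f : ℝ → ℝ} (hmono : MonotoneOn f (Set.Ioo 0 1))
    (hsym : ∀ u ∈ Set.Ioo (0:ℝ) 1, f (1 - u) = - f u)
    {u : ℝ} (hu : u ∈ Set.Ioo (0:ℝ) 1) (h : u > 1/2) : 0 ≤ f u := by
  have h1u : (1:ℝ) - u ∈ Set.Ioo (0:ℝ) 1 := ⟨by linarith [hu.2], by linarith [hu.1]⟩
  have h2 := hsym u hu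
  nlinarith [hmono h1u hu (by linarith : (1:ℝ) - u ≤ u)]

lemma fneg_half {f : ℝ → ℝ} (hmono : MonotoneOn f (Set.Ioo 0 1))
    (hsym : ∀ u ∈ Set.Ioo (0:ℝ) 1, f (1 - u) = - f u)
    {u : ℝ} (hu : u ∈ Set.Ioo (0:ℝ) 1) (h : u < 1/2) : f u ≤ 0 := by
  have h1u : (1:ℝ) - u ∈ Set.Ioo (0:ℝ) 1 := ⟨by linarith [hu.2], by linarith [hu.1]⟩
  have h2 := hsym u hu
  nlinarith [hmono hu h1u (by linarith : u ≤ (1:ℝ) - u)]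

lemma key_M {f₁ f₂ f₃ : ℝ → ℝ}
    (hf₁mono : MonotoneOn f₁ (Set.Ioo 0 1)) (hf₂mono : MonotoneOn f₂ (Set.Ioo 0 1))
    (hf₃mono : MonotoneOn f₃ (Set.Ioo 0 1))
    (hf₁sym : ∀ u ∈ Set.Ioo (0:ℝ) 1, f₁ (1 - u) = - f₁ u)
    (hf₂sym : ∀ u ∈ Set.Ioo (0:ℝ) 1, f₂ (1 - u) = - f₂ u)
    (hf₃sym : ∀ u ∈ Set.Ioo (0:ℝ) 1, f₃ (1 - u) = - f₃ u)
    {u : ℝ} (hu : u ∈ Set.Ioo (0:ℝ) 1) (hne : u ≠ 1/2) (v : ℝ) :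
    f₁ u * f₂ (u2 u v) * f₃ (u3M u v) = |f₁ u * f₂ u * f₃ u| := by
  rw [u2_eq, u3M_eq]
  by_cases hu2 : u > 1/2
  · have h1 := fpos_half hf₁mono hf₁sym hu hu2
    have h2 := fpos_half hf₂mono hf₂sym hu hu2
    have h3 := fpos_half hf₃mono hf₃sym hu hu2
    rw [abs_of_nonneg (by positivity)]
    by_cases hv : v > 1/2
    · rw [if_pos hv, if_pos (by tauto)]
    · rw [if_neg hv, if_neg (by tauto), hf₂sym u hu, hf₃sym u hu]; ring
  · have hu2' : u < 1/2 := lt_of_le_of_ne (not_lt.mp hu2) hne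
    have h1 := fneg_half hf₁mono hf₁sym hu hu2'
    have h2 := fneg_half hf₂mono hf₂sym hu hu2'
    have h3 := fneg_half hf₃mono hf₃sym hu hu2'
    have hp : f₁ u * f₂ u * f₃ u ≤ 0 := by nlinarith [mul_nonneg (mul_nonneg (neg_nonneg.2 h1) (neg_nonneg.2 h2)) (neg_nonneg.2 h3)]
    rw [abs_of_nonpos hp]
    by_cases hv : v > 1/2
    · rw [if_pos hv, if_neg (by tauto), hf₃sym u hu]; ring
    · rw [if_neg hv, if_pos (by tauto), hf₂sym u hu]; ring

lemma u3M_mem {u : ℝ} (hu : u ∈ Set.Ioo (0:ℝ) 1) (v : ℝ) : u3M u v ∈ Set.Ioo (0:ℝ) 1 := by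
  rw [u3M_eq]
  split_ifs
  · exact hu
  · exact ⟨by linarith [hu.2], by linarith [hu.1]⟩

lemma key_m {f₁ f₂ f₃ : ℝ → ℝ}
    (hf₁mono : MonotoneOn f₁ (Set.Ioo 0 1)) (hf₂mono : MonotoneOn f₂ (Set.Ioo 0 1))
    (hf₃mono : MonotoneOn f₃ (Set.Ioo 0 1))
    (hf₁sym : ∀ u ∈ Set.Ioo (0:ℝ) 1, f₁ (1 - u) = - f₁ u)
    (hf₂sym : ∀ u ∈ Set.Ioo (0:ℝ) 1, f₂ (1 - u) = - f₂ u)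
    (hf₃sym : ∀ u ∈ Set.Ioo (0:ℝ) 1, f₃ (1 - u) = - f₃ u)
    {u : ℝ} (hu : u ∈ Set.Ioo (0:ℝ) 1) (hne : u ≠ 1/2) (v : ℝ) :
    f₁ u * f₂ (u2 u v) * f₃ (u3m u v) = -|f₁ u * f₂ u * f₃ u| := by
  rw [u3m_eq, hf₃sym _ (u3M_mem hu v),
    ← key_M hf₁mono hf₂mono hf₃mono hf₁sym hf₂sym hf₃sym hu hne v]
  ring


/-- the coskewness under the mixture copula `C^λ` is the convex combination
`λ·S̄ + (1−λ)·S̲ = (2λ−1)·∫₀¹ |f₁ f₂ f₃|` of the extreme coskewnesses. -/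
theorem stmt3 {Ω : Type} [MeasurableSpace Ω] (P : Measure Ω) [IsProbabilityMeasure P]
    (U V B : Ω → ℝ) (lam : ℝ) (hlam : lam ∈ Set.Icc (0:ℝ) 1)
    (hU : Measurable U) (hV : Measurable V) (hB : Measurable B)
    (hUunif : P.map U = volume.restrict (Set.Icc (0:ℝ) 1))
    (hVunif : P.map V = volume.restrict (Set.Icc (0:ℝ) 1))
    (hUV : IndepFun U V P)
    (hB01 : ∀ ω, B ω = 0 ∨ B ω = 1)
    (hBlam : P {ω | B ω = 1} = ENNReal.ofReal lam)
    (hBind : IndepFun (fun ω => (U ω, V ω)) B P)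
    (f₁ f₂ f₃ : ℝ → ℝ)
    (hf₁ : Measurable f₁) (hf₂ : Measurable f₂) (hf₃ : Measurable f₃)
    (hf₁mono : MonotoneOn f₁ (Set.Ioo 0 1)) (hf₂mono : MonotoneOn f₂ (Set.Ioo 0 1))
    (hf₃mono : MonotoneOn f₃ (Set.Ioo 0 1))
    (hf₁sym : ∀ u ∈ Set.Ioo (0:ℝ) 1, f₁ (1 - u) = - f₁ u)
    (hf₂sym : ∀ u ∈ Set.Ioo (0:ℝ) 1, f₂ (1 - u) = - f₂ u)
    (hf₃sym : ∀ u ∈ Set.Ioo (0:ℝ) 1, f₃ (1 - u) = - f₃ u)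
    (hf₁int : IntegrableOn (fun u => |f₁ u| ^ 3) (Set.Ioo (0:ℝ) 1) volume)
    (hf₂int : IntegrableOn (fun u => |f₂ u| ^ 3) (Set.Ioo (0:ℝ) 1) volume)
    (hf₃int : IntegrableOn (fun u => |f₃ u| ^ 3) (Set.Ioo (0:ℝ) 1) volume) :
    (∫ ω, f₁ (U ω) * f₂ (u2 (U ω) (V ω))
        * f₃ (B ω * u3M (U ω) (V ω) + (1 - B ω) * u3m (U ω) (V ω)) ∂P
      = lam * ∫ ω, f₁ (U ω) * f₂ (u2 (U ω) (V ω)) * f₃ (u3M (U ω) (V ω)) ∂P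
        + (1 - lam) * ∫ ω, f₁ (U ω) * f₂ (u2 (U ω) (V ω)) * f₃ (u3m (U ω) (V ω)) ∂P) ∧
    (∫ ω, f₁ (U ω) * f₂ (u2 (U ω) (V ω))
        * f₃ (B ω * u3M (U ω) (V ω) + (1 - B ω) * u3m (U ω) (V ω)) ∂P
      = (2 * lam - 1) * ∫ u in Set.Ioo (0:ℝ) 1, |f₁ u * f₂ u * f₃ u|) := by
  obtain ⟨hlam0, hlam1⟩ := hlam
  set g : ℝ → ℝ := fun u => |f₁ u * f₂ u * f₃ u| with hg_def
  have hg_meas : Measurable g := ((hf₁.mul hf₂).mul hf₃).abs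
  have hsum : IntegrableOn (fun u => |f₁ u|^3 + |f₂ u|^3 + |f₃ u|^3) (Set.Ioo (0:ℝ) 1) volume :=
    (hf₁int.add hf₂int).add hf₃int
  have hgIoo : IntegrableOn g (Set.Ioo (0:ℝ) 1) volume := by
    refine hsum.mono' hg_meas.aestronglyMeasurable (Filter.Eventually.of_forall fun u => ?_)
    have h1 := abs_nonneg (f₁ u); have h2 := abs_nonneg (f₂ u); have h3 := abs_nonneg (f₃ u)
    simp only [hg_def, Real.norm_eq_abs, abs_abs, abs_mul]
    nlinarith [mul_nonneg (mul_nonneg h1 h2) h3,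
      mul_nonneg (by positivity : (0:ℝ) ≤ |f₁ u| + |f₂ u| + |f₃ u|)
        (by positivity : (0:ℝ) ≤ (|f₁ u| - |f₂ u|)^2 + (|f₂ u| - |f₃ u|)^2 + (|f₁ u| - |f₃ u|)^2)]
  have hmapU : P.map U = volume.restrict (Set.Ioo (0:ℝ) 1) := by
    rw [hUunif, ← Measure.restrict_congr_set Ioo_ae_eq_Icc]
  have hgU_int : Integrable (fun ω => g (U ω)) P := by
    have h : Integrable g (P.map U) := by rw [hmapU]; exact hgIoo
    exact (integrable_map_measure hg_meas.aestronglyMeasurable hU.aemeasurable).mp h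
  have hgU_eq : ∫ ω, g (U ω) ∂P = ∫ u in Set.Ioo (0:ℝ) 1, g u := by
    rw [← integral_map hU.aemeasurable hg_meas.aestronglyMeasurable, hmapU]
  have hae : ∀ᵐ ω ∂P, U ω ∈ Set.Ioo (0:ℝ) 1 ∧ U ω ≠ 1/2 := by
    have hs : MeasurableSet {x : ℝ | x ∈ Set.Ioo (0:ℝ) 1 ∧ x ≠ 1/2} :=
      measurableSet_Ioo.inter (measurableSet_singleton (1/2 : ℝ)).compl
    refine (ae_map_iff hU.aemeasurable hs).mp ?_
    rw [ae_iff, hmapU, Measure.restrict_apply]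
    · refine measure_mono_null (fun x hx => ?_) (measure_singleton (1/2 : ℝ))
      obtain ⟨hx1, hx2⟩ := hx
      simp only [Set.mem_setOf_eq, not_and, not_ne_iff] at hx1
      exact hx1 hx2
    · exact hs.compl
  have hM : ∫ ω, f₁ (U ω) * f₂ (u2 (U ω) (V ω)) * f₃ (u3M (U ω) (V ω)) ∂P
      = ∫ u in Set.Ioo (0:ℝ) 1, g u := by
    rw [← hgU_eq]
    exact integral_congr_ae (hae.mono fun ω h =>
      key_M hf₁mono hf₂mono hf₃mono hf₁sym hf₂sym hf₃sym h.1 h.2 (V ω))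
  have hm : ∫ ω, f₁ (U ω) * f₂ (u2 (U ω) (V ω)) * f₃ (u3m (U ω) (V ω)) ∂P
      = -∫ u in Set.Ioo (0:ℝ) 1, g u := by
    have h : ∫ ω, f₁ (U ω) * f₂ (u2 (U ω) (V ω)) * f₃ (u3m (U ω) (V ω)) ∂P
        = ∫ ω, -(g (U ω)) ∂P := integral_congr_ae (hae.mono fun ω h =>
      key_m hf₁mono hf₂mono hf₃mono hf₁sym hf₂sym hf₃sym h.1 h.2 (V ω))
    rw [h, integral_neg, hgU_eq]
  have hmix_eq : ∀ᵐ ω ∂P, f₁ (U ω) * f₂ (u2 (U ω) (V ω))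
      * f₃ (B ω * u3M (U ω) (V ω) + (1 - B ω) * u3m (U ω) (V ω))
      = (2 * B ω - 1) * g (U ω) := by
    refine hae.mono fun ω h => ?_
    rcases hB01 ω with hb | hb
    · have harg : B ω * u3M (U ω) (V ω) + (1 - B ω) * u3m (U ω) (V ω) = u3m (U ω) (V ω) := by
        rw [hb]; ring
      rw [harg, key_m hf₁mono hf₂mono hf₃mono hf₁sym hf₂sym hf₃sym h.1 h.2 (V ω), hb]; ring
    · have harg : B ω * u3M (U ω) (V ω) + (1 - B ω) * u3m (U ω) (V ω) = u3M (U ω) (V ω) := by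
        rw [hb]; ring
      rw [harg, key_M hf₁mono hf₂mono hf₃mono hf₁sym hf₂sym hf₃sym h.1 h.2 (V ω), hb]; ring
  have hBint : Integrable B P := (integrable_const (1:ℝ)).mono' hB.aestronglyMeasurable
    (Filter.Eventually.of_forall fun ω => by rcases hB01 ω with h | h <;> norm_num [h])
  have hindep : IndepFun B (fun ω => g (U ω)) P :=
    hBind.symm.comp measurable_id (hg_meas.comp measurable_fst)
  have hBg_int : Integrable (fun ω => B ω * g (U ω)) P := hindep.integrable_mul hBint hgU_int
  have hBg : ∫ ω, B ω * g (U ω) ∂P = (∫ ω, B ω ∂P) * ∫ ω, g (U ω) ∂P :=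
    hindep.integral_fun_mul_eq_mul_integral hBint.aestronglyMeasurable hgU_int.aestronglyMeasurable
  have hsetB : MeasurableSet {ω | B ω = 1} := hB (measurableSet_singleton 1)
  have hBval : ∫ ω, B ω ∂P = lam := by
    have hrep : B = Set.indicator {ω | B ω = 1} (fun _ => (1:ℝ)) := by
      funext ω
      rcases hB01 ω with h | h
      · rw [Set.indicator_apply, if_neg (by simp [Set.mem_setOf_eq, h]), h]
      · rw [Set.indicator_apply, if_pos (by simp [Set.mem_setOf_eq, h]), h]
    rw [hrep, integral_indicator_const (1:ℝ) hsetB, measureReal_def, hBlam, smul_eq_mul, mul_one, ENNReal.toReal_ofReal hlam0]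
  have hmain : ∫ ω, f₁ (U ω) * f₂ (u2 (U ω) (V ω))
      * f₃ (B ω * u3M (U ω) (V ω) + (1 - B ω) * u3m (U ω) (V ω)) ∂P
      = (2 * lam - 1) * ∫ u in Set.Ioo (0:ℝ) 1, g u := by
    rw [integral_congr_ae hmix_eq]
    have hfe : (fun ω => (2 * B ω - 1) * g (U ω))
        = fun ω => 2 * (B ω * g (U ω)) - g (U ω) := by funext ω; ring
    rw [hfe, integral_sub (hBg_int.const_mul 2) hgU_int, integral_const_mul 2, hBg, hBval, hgU_eq]
    ring
  refine ⟨?_, ?_⟩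
  · rw [hmain, hM, hm]; ring
  · exact hmain
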